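/- (Dual strict decrease, dual of Lemma 4.4) For every p ∈ {0, …, n} and every index 1 ≤ i ≤ l_p†, the value a_i^{(p)†} is a well-defined integer satisfying a_{i−1}^{(p)†} < a_i^{(p)†} ≤ n; hence the sequence a_0^{(p)†} < a_1^{(p)†} < ⋯ < a_{l_p†}^{(p)†} is strictly increasing and bounded above by n. -/
import Mathlib


/-- `d(p) = max { s j : t j ≤ p }`, with `⊥` meaning "undefined" (i.e. `-∞`). -/
noncomputable def dvalue (m : ℕ) (s t : ℕ → ℤ) (p : ℤ) : WithBot ℤ :=
  ((Finset.range m).filter (fun j => t j ≤ p)).sup (fun j => (s j : WithBot ℤ))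

/-- `d†(p) = min { t j : s j ≥ p }`, with `⊤` meaning "undefined" (i.e. `+∞`). -/
noncomputable def ddual (m : ℕ) (s t : ℕ → ℤ) (p : ℤ) : WithTop ℤ :=
  ((Finset.range m).filter (fun j => p ≤ s j)).inf (fun j => (t j : WithTop ℤ))

/-- The extension of `d` to `WithBot ℤ`, sending `⊥` to `⊥`. -/
noncomputable def dW (m : ℕ) (s t : ℕ → ℤ) : WithBot ℤ → WithBot ℤ :=
  WithBot.recBotCoe ⊥ (dvalue m s t)

/-- The extension of `d†` to `WithTop ℤ`, sending `⊤` to `⊤`. -/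
noncomputable def dtW (m : ℕ) (s t : ℕ → ℤ) : WithTop ℤ → WithTop ℤ :=
  WithTop.recTopCoe ⊤ (ddual m s t)

/-- The (total extension of the) sequence `a_i^{(p)}`:
`a_0 = p`, `a_1 = p - 1`, `a_{i+2} = d(a_i)`.  For `i ≤ l_p` this agrees with the
sequence of the paper. -/
noncomputable def aSeq (m : ℕ) (s t : ℕ → ℤ) (p : ℤ) : ℕ → WithBot ℤ
  | 0 => (p : WithBot ℤ)
  | 1 => ((p - 1 : ℤ) : WithBot ℤ)
  | i + 2 => dW m s t (aSeq m s t p i)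

/-- The length `l_p`: `l_0 = 0`, and for `p ≠ 0` it is the least `j ≥ 1` with
`d(a_{j-1}^{(p)}) = d(a_j^{(p)})` (undefined values compared as `⊥`). -/
noncomputable def lSeq (m : ℕ) (s t : ℕ → ℤ) (p : ℤ) : ℕ :=
  if p = 0 then 0
  else sInf {j : ℕ | 1 ≤ j ∧ dW m s t (aSeq m s t p (j - 1)) = dW m s t (aSeq m s t p j)}

/-- The (total extension of the) dual sequence `a_i^{(p)†}`:
`a_0 = p`, `a_1 = p + 1`, `a_{i+2} = d†(a_i)`. -/
noncomputable def aSeqD (m : ℕ) (s t : ℕ → ℤ) (p : ℤ) : ℕ → WithTop ℤ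
  | 0 => (p : WithTop ℤ)
  | 1 => ((p + 1 : ℤ) : WithTop ℤ)
  | i + 2 => dtW m s t (aSeqD m s t p i)

/-- The dual length `l_p†`: `l_n† = 0`, and for `p ≠ n` it is the least `j ≥ 1` with
`d†(a_{j-1}^{(p)†}) = d†(a_j^{(p)†})` (undefined values compared as `⊤`). -/
noncomputable def lSeqD (n : ℤ) (m : ℕ) (s t : ℕ → ℤ) (p : ℤ) : ℕ :=
  if p = n then 0
  else sInf {j : ℕ | 1 ≤ j ∧ dtW m s t (aSeqD m s t p (j - 1)) = dtW m s t (aSeqD m s t p j)}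

lemma ddual_mono' (m : ℕ) (s t : ℕ → ℤ) : Monotone (ddual m s t) := by
  intro p q hpq
  apply Finset.inf_mono
  intro j hj
  simp only [Finset.mem_filter, Finset.mem_range] at hj ⊢
  exact ⟨hj.1, hpq.trans hj.2⟩

lemma dtW_mono' (m : ℕ) (s t : ℕ → ℤ) : Monotone (dtW m s t) := by
  intro x y hxy
  induction y using WithTop.recTopCoe with
  | top => exact le_top
  | coe q =>
    induction x using WithTop.recTopCoe with
    | top => simp at hxy
    | coe p =>
      simp only [dtW, WithTop.recTopCoe_coe]
      exact ddual_mono' m s t (WithTop.coe_le_coe.mp hxy)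

lemma ddual_bounds' (n : ℤ) (m : ℕ) (s t : ℕ → ℤ)
    (htn : ∀ j : ℕ, j < m → t j ≤ n) (hlen : ∀ j : ℕ, j < m → s j + 2 ≤ t j)
    (q : ℤ) (h : ddual m s t q ≠ ⊤) :
    ((q + 2 : ℤ) : WithTop ℤ) ≤ ddual m s t q ∧ ddual m s t q ≤ (n : WithTop ℤ) := by
  have hne : ((Finset.range m).filter (fun j => q ≤ s j)).Nonempty := by
    by_contra hne
    rw [Finset.not_nonempty_iff_eq_empty] at hne
    exact h (by rw [ddual, hne, Finset.inf_empty])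
  constructor
  · apply Finset.le_inf
    intro j hj
    rw [Finset.mem_filter, Finset.mem_range] at hj
    exact WithTop.coe_le_coe.mpr (by have := hlen j hj.1; linarith [hj.2])
  · obtain ⟨j, hj⟩ := hne
    have hjm : j < m := by
      rw [Finset.mem_filter, Finset.mem_range] at hj; exact hj.1
    exact (Finset.inf_le hj).trans (WithTop.coe_le_coe.mpr (htn j hjm))

theorem lemma_4_4_dual
    (n : ℤ) (m : ℕ) (s t : ℕ → ℤ)
    (hn : 0 ≤ n)
    (hsmono : ∀ i j : ℕ, i < j → j < m → s i < s j)
    (htmono : ∀ i j : ℕ, i < j → j < m → t i < t j)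
    (hs0 : ∀ j : ℕ, j < m → 0 ≤ s j)
    (htn : ∀ j : ℕ, j < m → t j ≤ n)
    (hlen : ∀ j : ℕ, j < m → s j + 2 ≤ t j)
    (p : ℤ) (hp0 : 0 ≤ p) (hpn : p ≤ n)
    (i : ℕ) (hi1 : 1 ≤ i) (hil : i ≤ lSeqD n m s t p) :
    aSeqD m s t p i ≠ ⊤ ∧ aSeqD m s t p (i - 1) < aSeqD m s t p i ∧
      aSeqD m s t p i ≤ (n : WithTop ℤ) := by
  set l := lSeqD n m s t p with hldef
  have hpn' : p ≠ n := by
    intro h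
    rw [hldef, lSeqD, if_pos h] at hil
    omega
  have hne : ∀ j : ℕ, 1 ≤ j → j < l →
      dtW m s t (aSeqD m s t p (j - 1)) ≠ dtW m s t (aSeqD m s t p j) := by
    intro j hj1 hjl
    have hjl' : j < sInf {j : ℕ | 1 ≤ j ∧
        dtW m s t (aSeqD m s t p (j - 1)) = dtW m s t (aSeqD m s t p j)} := by
      rwa [hldef, lSeqD, if_neg hpn'] at hjl
    have := Nat.notMem_of_lt_sInf hjl'
    simp only [Set.mem_setOf_eq, not_and] at this
    exact this hj1
  have key : ∀ i : ℕ, 1 ≤ i → i ≤ l →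
      aSeqD m s t p i ≠ ⊤ ∧ aSeqD m s t p (i - 1) < aSeqD m s t p i ∧
        aSeqD m s t p i ≤ (n : WithTop ℤ) := by
    intro i
    induction i using Nat.strong_induction_on with
    | _ i IH =>
      match i with
      | 0 => intro h; omega
      | 1 =>
        intro _ h1l
        have hpltn : p < n := lt_of_le_of_ne hpn hpn'
        refine ⟨?_, ?_, ?_⟩
        · simp [aSeqD]
        · show ((p : ℤ) : WithTop ℤ) < ((p + 1 : ℤ) : WithTop ℤ)
          exact WithTop.coe_lt_coe.mpr (by omega)
        · show ((p + 1 : ℤ) : WithTop ℤ) ≤ (n : WithTop ℤ)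
          exact WithTop.coe_le_coe.mpr (by omega)
      | (k + 2) =>
        intro _ hkl
        have hIH1 := IH (k + 1) (by omega) (by omega) (by omega)
        -- a_k ≠ ⊤ and a_k ≤ n, a_k < a_{k+1}
        have hak : aSeqD m s t p k ≠ ⊤ ∧ aSeqD m s t p k ≤ (n : WithTop ℤ) := by
          match k with
          | 0 =>
            refine ⟨by simp [aSeqD], ?_⟩
            show ((p : ℤ) : WithTop ℤ) ≤ (n : WithTop ℤ)
            exact WithTop.coe_le_coe.mpr hpn
          | (k' + 1) =>
            have := IH (k' + 1) (by omega) (by omega) (by omega)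
            exact ⟨this.1, this.2.2⟩
        have haklt : aSeqD m s t p k < aSeqD m s t p (k + 1) := by
          have := hIH1.2.1
          simpa using this
        have heq2 : aSeqD m s t p (k + 2) = dtW m s t (aSeqD m s t p k) := rfl
        have hneq := hne (k + 1) (by omega) (by omega)
        simp only [Nat.add_sub_cancel] at hneq
        have hmono : dtW m s t (aSeqD m s t p k) ≤ dtW m s t (aSeqD m s t p (k + 1)) :=
          dtW_mono' m s t haklt.le
        have hnt : aSeqD m s t p (k + 2) ≠ ⊤ := by
          intro htop
          rw [heq2] at htop
          exact hneq (htop.trans (top_le_iff.mp (htop ▸ hmono)).symm)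
        -- extract integer value of a_k
        obtain ⟨q, hq'⟩ := WithTop.ne_top_iff_exists.mp hak.1
        have hq : aSeqD m s t p k = (q : WithTop ℤ) := hq'.symm
        have hdd : aSeqD m s t p (k + 2) = ddual m s t q := by
          rw [heq2, hq]; rfl
        have hddnt : ddual m s t q ≠ ⊤ := hdd ▸ hnt
        obtain ⟨hlow, hhigh⟩ := ddual_bounds' n m s t htn hlen q hddnt
        refine ⟨hnt, ?_, hdd ▸ hhigh⟩
        show aSeqD m s t p (k + 1) < aSeqD m s t p (k + 2)
        match k with
        | 0 =>
          -- a_1 = p + 1, a_2 ≥ q + 2 with q = p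
          have hqp : q = p := by
            have : ((p : ℤ) : WithTop ℤ) = (q : WithTop ℤ) := hq
            exact_mod_cast this.symm
          calc aSeqD m s t p 1 = ((p + 1 : ℤ) : WithTop ℤ) := rfl
            _ < ((q + 2 : ℤ) : WithTop ℤ) := WithTop.coe_lt_coe.mpr (by omega)
            _ ≤ aSeqD m s t p 2 := hdd ▸ hlow
        | (k' + 1) =>
          -- a_{k+1} = dtW a_{k'}, a_{k+2} = dtW a_{k'+1}
          have hlt' : aSeqD m s t p k' < aSeqD m s t p (k' + 1) := by
            have := (IH (k' + 1) (by omega) (by omega) (by omega)).2.1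
            simpa using this
          have hle : aSeqD m s t p (k' + 2) ≤ aSeqD m s t p (k' + 3) := by
            show dtW m s t (aSeqD m s t p k') ≤ dtW m s t (aSeqD m s t p (k' + 1))
            exact dtW_mono' m s t hlt'.le
          have hneq' := hne (k' + 1) (by omega) (by omega)
          simp only [Nat.add_sub_cancel] at hneq'
          exact lt_of_le_of_ne hle hneq'
  exact key i hi1 hil
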